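/- There exists a constant C > 0 such that for all t ∈ (0,∞): ∫_0^{e^t − 1} |K0(r,t)| dr ≤ C. In particular, the kernel K0(·,t) has an integrable singularity at r = e^t − 1 and its L¹-norm on (0, e^t − 1) is bounded uniformly in t. -/

import Mathlib

open MeasureTheory Real intervalIntegral

/-- Rising factorial (Pochhammer symbol) `(q)_n = q (q+1) ⋯ (q+n−1)`. -/
noncomputable def risingFactorial (q : ℝ) : ℕ → ℝ
  | 0 => 1
  | n + 1 => risingFactorial q n * (q + (n : ℝ))

/-- The Gauss hypergeometric function `F(a,b;c;x)` defined by its power series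
`∑ ((a)_n (b)_n / ((c)_n n!)) x^n`. -/
noncomputable def hyperF (a b c x : ℝ) : ℝ :=
  ∑' n : ℕ, (risingFactorial a n * risingFactorial b n) /
    (risingFactorial c n * (Nat.factorial n : ℝ)) * x ^ n

/-- The kernel `K1(z,t) = ((1+e^t)²−z²)^{−1/2} F(1/2,1/2;1;((e^t−1)²−z²)/((e^t+1)²−z²))`. -/
noncomputable def K1 (z t : ℝ) : ℝ :=
  ((1 + Real.exp t) ^ 2 - z ^ 2) ^ (-(1 : ℝ) / 2) *
    hyperF (1 / 2) (1 / 2) 1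
      (((Real.exp t - 1) ^ 2 - z ^ 2) / ((Real.exp t + 1) ^ 2 - z ^ 2))

/-- The kernel `K0(z,t)`. -/
noncomputable def K0 (z t : ℝ) : ℝ :=
  -(1 / (2 * ((Real.exp t - 1) ^ 2 - z ^ 2) * Real.sqrt ((Real.exp t + 1) ^ 2 - z ^ 2))) *
    ((1 - Real.exp (2 * t) + z ^ 2) *
        hyperF (-(1 / 2)) (1 / 2) 1
          (((Real.exp t - 1) ^ 2 - z ^ 2) / ((Real.exp t + 1) ^ 2 - z ^ 2))
      + 2 * (Real.exp t - 1) *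
        hyperF (1 / 2) (1 / 2) 1
          (((Real.exp t - 1) ^ 2 - z ^ 2) / ((Real.exp t + 1) ^ 2 - z ^ 2)))


lemma rf_succ (q : ℝ) (n : ℕ) :
    risingFactorial q (n+1) = risingFactorial q n * (q + n) := rfl

lemma rf_zero (q : ℝ) : risingFactorial q 0 = 1 := rfl

lemma rf_one (n : ℕ) : risingFactorial 1 n = (n.factorial : ℝ) := by
  induction n with
  | zero => norm_num [rf_zero]
  | succ n ih => rw [rf_succ, ih, Nat.factorial_succ]; push_cast; ring

lemma rf_half_pos (n : ℕ) : 0 < risingFactorial (1/2) n := by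
  induction n with
  | zero => norm_num [rf_zero]
  | succ n ih => rw [rf_succ]; positivity

lemma rf_half_le (n : ℕ) : risingFactorial (1/2) n ≤ (n.factorial : ℝ) := by
  induction n with
  | zero => norm_num [rf_zero]
  | succ n ih =>
    rw [rf_succ, Nat.factorial_succ]
    push_cast
    have h1 := rf_half_pos n
    have h2 : (1:ℝ) ≤ (n.factorial : ℝ) := by exact_mod_cast n.factorial_pos
    nlinarith [n.cast_nonneg (α := ℝ)]

lemma rf_half_sq (n : ℕ) :
    risingFactorial (1/2) n ^ 2 * ((n:ℝ)+1) ≤ ((n.factorial : ℝ))^2 := by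
  induction n with
  | zero => norm_num [rf_zero]
  | succ n ih =>
    rw [rf_succ, Nat.factorial_succ]
    push_cast
    have h1 := rf_half_pos n
    have hn : (0:ℝ) ≤ (n:ℝ) := n.cast_nonneg
    have hfact : ((1:ℝ)/2+(n:ℝ))^2*((n:ℝ)+2) ≤ ((n:ℝ)+1)^3 := by nlinarith
    have h2 : risingFactorial (1/2) n ^ 2 * (((n:ℝ)+1)^3 - ((1:ℝ)/2+(n:ℝ))^2*((n:ℝ)+2)) ≥ 0 :=
      mul_nonneg (sq_nonneg _) (by linarith)
    have h3 : risingFactorial (1/2) n ^ 2 * (((n:ℝ)+1) * ((n:ℝ)+1)^2) ≤ ((n.factorial : ℝ))^2 * ((n:ℝ)+1)^2 := by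
      nlinarith [sq_nonneg ((n:ℝ)+1)]
    nlinarith

lemma rf_shift (q : ℝ) (n : ℕ) :
    risingFactorial q (n+1) = q * risingFactorial (q+1) n := by
  induction n with
  | zero => simp [rf_succ, rf_zero]
  | succ n ih => rw [rf_succ, ih, rf_succ]; push_cast; ring

lemma rf_neg_half (n : ℕ) :
    risingFactorial (-(1/2)) (n+1) = -(1/2) * risingFactorial (1/2) n := by
  rw [rf_shift]; norm_num

-- telescoping sum
lemma hasSum_tele : HasSum (fun n : ℕ => (1:ℝ)/(((n:ℝ)+1)*((n:ℝ)+2))) 1 := by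
  rw [hasSum_iff_tendsto_nat_of_nonneg (fun i => by positivity)]
  have key : ∀ N : ℕ, ∑ i ∈ Finset.range N, (1:ℝ)/(((i:ℝ)+1)*((i:ℝ)+2)) = 1 - 1/((N:ℝ)+1) := by
    intro N
    induction N with
    | zero => simp
    | succ N ih =>
      rw [Finset.sum_range_succ, ih]
      have h1 : ((N:ℝ)+1) ≠ 0 := by positivity
      have h2 : ((N:ℝ)+2) ≠ 0 := by positivity
      push_cast
      field_simp
      ring
  simp only [key]
  simpa using tendsto_const_nhds.sub (tendsto_one_div_add_atTop_nhds_zero_nat (𝕜 := ℝ))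

-- the log inequality
lemma neg_log_le (x : ℝ) (hx0 : 0 ≤ x) (hx1 : x < 1) :
    -Real.log (1 - x) ≤ x / Real.sqrt (1 - x) := by
  set u := 1 - x with hu
  have hu0 : 0 < u := by simp [hu]; linarith
  set s := Real.sqrt u with hs
  have hs0 : 0 < s := Real.sqrt_pos.mpr hu0
  have hss : s * s = u := Real.mul_self_sqrt hu0.le
  set y := -Real.log s with hy
  have hsy : s = Real.exp (-y) := by
    rw [hy, neg_neg, Real.exp_log hs0]
  have hy0 : 0 ≤ y := by
    rw [hy, neg_nonneg]
    apply Real.log_nonpos hs0.le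
    nlinarith [Real.sq_sqrt hu0.le]
  have hsinh : y ≤ Real.sinh y := Real.self_le_sinh_iff.mpr hy0
  have hlogu : Real.log u = -2 * y := by
    rw [← hss, Real.log_mul hs0.ne' hs0.ne', hy]; ring
  have hsinh_eq : Real.sinh y = (1/s - s)/2 := by
    rw [Real.sinh_eq, hsy, neg_neg, Real.exp_neg, Real.exp_log hs0]
    field_simp
  rw [hlogu]
  have : x / s = (1 - u)/s := by rw [hu]; ring_nf
  rw [this]
  have h1s : (1-u)/s = 1/s - s := by
    field_simp
    linarith [hss]
  rw [h1s]
  nlinarith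

lemma fact_pos_real (n : ℕ) : (0:ℝ) < (n.factorial : ℝ) := by exact_mod_cast n.factorial_pos

lemma rf_neg_abs (n : ℕ) : |risingFactorial (-(1/2)) n| ≤ (n.factorial : ℝ) := by
  cases n with
  | zero => norm_num [rf_zero]
  | succ n =>
    rw [rf_neg_half, abs_mul]
    have h1 := rf_half_pos n
    have h2 := rf_half_le n
    have h3 : (n.factorial : ℝ) ≤ ((n+1).factorial : ℝ) := by
      exact_mod_cast Nat.factorial_le (Nat.le_succ n)
    rw [abs_of_pos h1, abs_neg]
    rw [abs_of_pos (by norm_num : (0:ℝ) < (1:ℝ)/2)]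
    nlinarith

-- summability of hyperF terms
lemma summable_hyper (a : ℝ) (ha : ∀ n, |risingFactorial a n| ≤ (n.factorial : ℝ))
    {x : ℝ} (hx0 : 0 ≤ x) (hx1 : x < 1) :
    Summable (fun n : ℕ => (risingFactorial a n * risingFactorial (1/2) n) /
      (risingFactorial 1 n * (Nat.factorial n : ℝ)) * x ^ n) := by
  apply Summable.of_norm_bounded (summable_geometric_of_lt_one hx0 hx1)
  intro n
  rw [Real.norm_eq_abs, rf_one, abs_mul, abs_div, abs_mul]
  have hf := fact_pos_real n
  have h1 := rf_half_pos n
  have h2 := rf_half_le n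
  have h3 := ha n
  have habs : |risingFactorial a n| ≥ 0 := abs_nonneg _
  rw [abs_of_pos h1, abs_of_pos (mul_pos hf hf), abs_of_nonneg (pow_nonneg hx0 n)]
  have hkey : |risingFactorial a n| * risingFactorial (1/2) n / ((n.factorial:ℝ) * (n.factorial:ℝ)) ≤ 1 := by
    rw [div_le_one (by positivity)]
    nlinarith
  nlinarith [pow_nonneg hx0 n]

lemma rf_half_abs (n : ℕ) : |risingFactorial (1/2) n| ≤ (n.factorial : ℝ) := by
  rw [abs_of_pos (rf_half_pos n)]; exact rf_half_le n

lemma kA (n : ℕ) : (1/2) * risingFactorial (1/2) n * risingFactorial (1/2) (n+1) *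
    (((n:ℝ)+1)*((n:ℝ)+2)) ≤ (((n+1).factorial : ℝ))^2 := by
  have h1 := rf_half_pos n
  have hsq := rf_half_sq n
  have hn : (0:ℝ) ≤ (n:ℝ) := n.cast_nonneg
  rw [rf_succ, Nat.factorial_succ]
  push_cast
  have hco : (1/2) * ((1:ℝ)/2 + (n:ℝ)) * (((n:ℝ)+1)*((n:ℝ)+2)) ≤ ((n:ℝ)+1)^2 * ((n:ℝ)+1) := by
    nlinarith
  nlinarith [sq_nonneg (risingFactorial (1/2) n), mul_pos h1 h1,
    fact_pos_real n, sq_nonneg ((n.factorial:ℝ))]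

lemma kB (n : ℕ) : risingFactorial (1/2) (n+1) * (risingFactorial (1/2) (n+1) +
    (1/2) * risingFactorial (1/2) n) * ((n:ℝ)+1) ≤ (((n+1).factorial : ℝ))^2 := by
  have h1 := rf_half_pos n
  have hsq := rf_half_sq n
  have hn : (0:ℝ) ≤ (n:ℝ) := n.cast_nonneg
  rw [rf_succ, Nat.factorial_succ]
  push_cast
  set r := risingFactorial (1/2) n with hr
  have h2 : r^2*(((n:ℝ)+1)) * (((1:ℝ)/2+(n:ℝ))*((n:ℝ)+1)) ≤ ((n.factorial:ℝ))^2 * (((1:ℝ)/2+(n:ℝ))*((n:ℝ)+1)) :=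
    mul_le_mul_of_nonneg_right hsq (by positivity)
  have h3 : ((n.factorial:ℝ))^2 * (((1:ℝ)/2+(n:ℝ))*((n:ℝ)+1)) ≤ ((n.factorial:ℝ))^2 * (((n:ℝ)+1)*((n:ℝ)+1)) := by
    have := sq_nonneg ((n.factorial:ℝ)); nlinarith
  nlinarith [h2, h3]

lemma hF1_bound {x : ℝ} (hx0 : 0 ≤ x) (hx1 : x < 1) :
    |hyperF (-(1/2)) (1/2) 1 x| ≤ 1 := by
  set g : ℕ → ℝ := fun n => (risingFactorial (-(1/2)) n * risingFactorial (1/2) n) /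
      (risingFactorial 1 n * (Nat.factorial n : ℝ)) * x ^ n with hg
  have hsum : Summable g := summable_hyper _ rf_neg_abs hx0 hx1
  have h0 : g 0 = 1 := by simp [hg, rf_zero]
  have heq : hyperF (-(1/2)) (1/2) 1 x = 1 + ∑' n, g (n+1) := by
    rw [hyperF]; rw [show (∑' (n : ℕ), risingFactorial (-(1/2)) n * risingFactorial (1/2) n /
      (risingFactorial 1 n * (Nat.factorial n : ℝ)) * x ^ n) = ∑' n, g n from rfl,
      Summable.tsum_eq_zero_add hsum, h0]
  have hform : ∀ n : ℕ, g (n+1) = -((1/2) * risingFactorial (1/2) n * risingFactorial (1/2) (n+1)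
      * x^(n+1) / (((n+1).factorial : ℝ) * ((n+1).factorial : ℝ))) := by
    intro n
    simp only [hg, rf_neg_half, rf_one]
    ring
  have hsum' : Summable (fun n => g (n+1)) := (summable_nat_add_iff 1).mpr hsum
  have hupper : ∑' n, g (n+1) ≤ 0 := by
    apply tsum_nonpos
    intro n
    rw [hform n, neg_nonpos]
    have h1 := rf_half_pos n
    have h2 := rf_half_pos (n+1)
    have h3 := fact_pos_real (n+1)
    have h4 : (0:ℝ) ≤ x^(n+1) := pow_nonneg hx0 _
    positivity
  have hlower : (-1:ℝ) ≤ ∑' n, g (n+1) := by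
    have hterm : ∀ n : ℕ, -g (n+1) ≤ 1/(((n:ℝ)+1)*((n:ℝ)+2)) := by
      intro n
      rw [hform n, neg_neg]
      have hfp := fact_pos_real (n+1)
      have hxn : x^(n+1) ≤ 1 := pow_le_one₀ hx0 hx1.le
      have hxn0 : (0:ℝ) ≤ x^(n+1) := pow_nonneg hx0 _
      have h1 := rf_half_pos n
      have h2 := rf_half_pos (n+1)
      rw [div_le_div_iff₀ (by positivity) (by positivity)]
      have hka := kA n
      have hcoef : (0:ℝ) ≤ (1/2) * risingFactorial (1/2) n * risingFactorial (1/2) (n+1) *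
          (((n:ℝ)+1)*((n:ℝ)+2)) := by positivity
      nlinarith [mul_le_mul_of_nonneg_left hxn hcoef]
    have h5 : ∑' n, -g (n+1) ≤ ∑' n : ℕ, 1/(((n:ℝ)+1)*((n:ℝ)+2)) :=
      Summable.tsum_le_tsum hterm hsum'.neg hasSum_tele.summable
    rw [tsum_neg, hasSum_tele.tsum_eq] at h5
    linarith
  rw [heq]
  rw [abs_le]
  constructor <;> linarith

lemma diff_bound {x : ℝ} (hx0 : 0 ≤ x) (hx1 : x < 1) :
    0 ≤ hyperF (1/2) (1/2) 1 x - hyperF (-(1/2)) (1/2) 1 x ∧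
    hyperF (1/2) (1/2) 1 x - hyperF (-(1/2)) (1/2) 1 x ≤ x / Real.sqrt (1-x) := by
  set g1 : ℕ → ℝ := fun n => (risingFactorial (-(1/2)) n * risingFactorial (1/2) n) /
      (risingFactorial 1 n * (Nat.factorial n : ℝ)) * x ^ n with hg1
  set g2 : ℕ → ℝ := fun n => (risingFactorial (1/2) n * risingFactorial (1/2) n) /
      (risingFactorial 1 n * (Nat.factorial n : ℝ)) * x ^ n with hg2
  have hs1 : Summable g1 := summable_hyper _ rf_neg_abs hx0 hx1
  have hs2 : Summable g2 := summable_hyper _ rf_half_abs hx0 hx1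
  have hdiff : hyperF (1/2) (1/2) 1 x - hyperF (-(1/2)) (1/2) 1 x = ∑' n, (g2 n - g1 n) := by
    rw [hyperF, hyperF, ← Summable.tsum_sub hs2 hs1]
  have hform : ∀ n : ℕ, g2 (n+1) - g1 (n+1) = risingFactorial (1/2) (n+1) *
      (risingFactorial (1/2) (n+1) + (1/2) * risingFactorial (1/2) n) * x^(n+1) /
      (((n+1).factorial : ℝ) * ((n+1).factorial : ℝ)) := by
    intro n
    simp only [hg1, hg2, rf_neg_half, rf_one]
    ring
  have hdpos : ∀ n : ℕ, 0 ≤ g2 n - g1 n := by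
    intro n
    cases n with
    | zero => simp [hg1, hg2, rf_zero]
    | succ n =>
      rw [hform n]
      have h1 := rf_half_pos n
      have h2 := rf_half_pos (n+1)
      have h3 := fact_pos_real (n+1)
      have h4 : (0:ℝ) ≤ x^(n+1) := pow_nonneg hx0 _
      positivity
  have hsd : Summable (fun n => g2 n - g1 n) := hs2.sub hs1
  refine ⟨by rw [hdiff]; exact tsum_nonneg hdpos, ?_⟩
  rw [hdiff]
  have hd0 : g2 0 - g1 0 = 0 := by simp [hg1, hg2, rf_zero]
  have heq2 : ∑' n, (g2 n - g1 n) = (g2 0 - g1 0) + ∑' n, (g2 (n+1) - g1 (n+1)) :=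
    Summable.tsum_eq_zero_add hsd
  rw [heq2, hd0, zero_add]
  have hlog : HasSum (fun n : ℕ => x^(n+1)/((n:ℝ)+1)) (-Real.log (1-x)) := by
    have h := Real.hasSum_pow_div_log_of_abs_lt_one (x := x) (by rwa [abs_of_nonneg hx0])
    exact_mod_cast h
  have hterm : ∀ n : ℕ, g2 (n+1) - g1 (n+1) ≤ x^(n+1)/((n:ℝ)+1) := by
    intro n
    rw [hform n]
    have hfp := fact_pos_real (n+1)
    have h1 := rf_half_pos n
    have h2 := rf_half_pos (n+1)
    have hxn0 : (0:ℝ) ≤ x^(n+1) := pow_nonneg hx0 _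
    rw [div_le_div_iff₀ (by positivity) (by positivity)]
    nlinarith [mul_le_mul_of_nonneg_right (kB n) hxn0]
  calc ∑' n, (g2 (n+1) - g1 (n+1)) ≤ ∑' n : ℕ, x^(n+1)/((n:ℝ)+1) :=
        Summable.tsum_le_tsum hterm ((summable_nat_add_iff 1).mpr hsd) hlog.summable
    _ = -Real.log (1-x) := hlog.tsum_eq
    _ ≤ x / Real.sqrt (1-x) := neg_log_le x hx0 hx1

set_option maxHeartbeats 1000000 in
lemma core_ineq (E z F1 F2 : ℝ) (hE : 1 < E) (hz0 : 0 ≤ z) (hza : z ≤ E - 1)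
    (hA : |F1| ≤ 1) (hB0 : 0 ≤ F2 - F1)
    (hB : F2 - F1 ≤ (((E-1)^2 - z^2)/((E+1)^2 - z^2)) /
      Real.sqrt (1 - ((E-1)^2 - z^2)/((E+1)^2 - z^2))) :
    |(-(1 / (2 * ((E - 1) ^ 2 - z ^ 2) * Real.sqrt ((E + 1) ^ 2 - z ^ 2))) *
      ((1 - E*E + z ^ 2) * F1 + 2 * (E - 1) * F2))| ≤
    1/(2*Real.sqrt ((E+1)*((E+1) - z))) +
      (E - 1)/(2*Real.sqrt E*((E+1)*((E+1) - z))) := by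
  have hE0 : 0 < E := by linarith
  obtain ⟨S, hSdef⟩ : ∃ S, S = (E - 1)^2 - z^2 := ⟨_, rfl⟩
  obtain ⟨D, hDdef⟩ : ∃ D, D = (E + 1)^2 - z^2 := ⟨_, rfl⟩
  rw [← hSdef, ← hDdef]
  have hD : 0 < D := by rw [hDdef]; nlinarith
  have hS0 : 0 ≤ S := by rw [hSdef]; nlinarith
  have hSD : S < D := by rw [hSdef, hDdef]; nlinarith
  have hd : 0 < Real.sqrt D := Real.sqrt_pos.mpr hD
  have he : 0 < Real.sqrt E := Real.sqrt_pos.mpr hE0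
  have hdd : Real.sqrt D * Real.sqrt D = D := Real.mul_self_sqrt hD.le
  have hee : Real.sqrt E * Real.sqrt E = E := Real.mul_self_sqrt hE0.le
  have hbpos : (0:ℝ) < (E+1)*((E+1) - z) := by nlinarith
  have hRHS0 : (0:ℝ) ≤ 1/(2*Real.sqrt ((E+1)*((E+1) - z))) +
      (E - 1)/(2*Real.sqrt E*((E+1)*((E+1) - z))) :=
    add_nonneg (div_nonneg zero_le_one (by positivity))
      (div_nonneg (by linarith) (mul_nonneg (by positivity) hbpos.le))
  rcases eq_or_lt_of_le hS0 with hS | hS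
  · rw [← hS]
    simpa using hRHS0
  -- main case : 0 < S
  have hDne : D ≠ 0 := ne_of_gt hD
  have hSne : S ≠ 0 := ne_of_gt hS
  have h1ζ : 1 - S/D = 4*E/D := by
    field_simp
    rw [hSdef, hDdef]; ring
  have hsq1ζ : Real.sqrt (1 - S/D) = 2*Real.sqrt E/Real.sqrt D := by
    rw [h1ζ, show 4*E/D = (2*Real.sqrt E/Real.sqrt D)^2 from by
      field_simp
      nlinarith [hdd, hee]]
    exact Real.sqrt_sq (div_nonneg (by positivity) (Real.sqrt_nonneg _))
  have hzform : (S/D) / Real.sqrt (1 - S/D) = S/(2*Real.sqrt E*Real.sqrt D) := by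
    rw [hsq1ζ, div_div_div_eq, div_eq_div_iff (by positivity) (by positivity)]
    linear_combination (2*Real.sqrt E*S) * hdd
  have hB2 : F2 - F1 ≤ S/(2*Real.sqrt E*Real.sqrt D) := by
    rw [← hzform, hSdef, hDdef]; exact hB
  have hBr : |(1 - E*E + z^2) * F1 + 2*(E-1)*F2| ≤ S + (E-1)*S/(Real.sqrt E*Real.sqrt D) := by
    have hid : (1 - E*E + z^2) * F1 + 2*(E-1)*F2 = (-S) * F1 + 2*(E-1)*(F2 - F1) := by
      rw [hSdef]; ring
    rw [hid]
    refine (abs_add_le _ _).trans ?_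
    have h1 : |(-S) * F1| ≤ S := by
      rw [abs_mul, abs_neg, abs_of_pos hS]
      nlinarith [abs_nonneg F1]
    have h2 : |2*(E-1)*(F2 - F1)| ≤ (E-1)*S/(Real.sqrt E*Real.sqrt D) := by
      rw [abs_mul, abs_of_nonneg (by linarith : (0:ℝ) ≤ 2*(E-1)), abs_of_nonneg hB0]
      calc 2*(E-1)*(F2 - F1) ≤ 2*(E-1)*(S/(2*Real.sqrt E*Real.sqrt D)) :=
            mul_le_mul_of_nonneg_left hB2 (by linarith)
        _ = (E-1)*S/(Real.sqrt E*Real.sqrt D) := by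
            field_simp
    linarith
  have habs : |(-(1 / (2 * S * Real.sqrt D)) * ((1 - E*E + z^2) * F1 + 2*(E-1)*F2))| =
      |(1 - E*E + z^2) * F1 + 2*(E-1)*F2| / (2*S*Real.sqrt D) := by
    rw [abs_mul, abs_neg, abs_of_pos (show (0:ℝ) < 1/(2*S*Real.sqrt D) by positivity),
      one_div_mul_eq_div]
  rw [habs]
  have key : ∀ d e : ℝ, 0 < d → 0 < e →
      (S + (E-1)*S/(e*d))/(2*S*d) = 1/(2*d) + (E-1)/(2*e*(d*d)) := by
    intro d e hd2 he2
    have : d ≠ 0 := ne_of_gt hd2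
    have : e ≠ 0 := ne_of_gt he2
    field_simp
  calc |(1 - E*E + z^2) * F1 + 2*(E-1)*F2| / (2*S*Real.sqrt D)
      ≤ (S + (E-1)*S/(Real.sqrt E*Real.sqrt D))/(2*S*Real.sqrt D) := by gcongr
    _ = 1/(2*Real.sqrt D) + (E-1)/(2*Real.sqrt E*(Real.sqrt D*Real.sqrt D)) :=
        key _ _ hd he
    _ = 1/(2*Real.sqrt D) + (E-1)/(2*Real.sqrt E*D) := by rw [hdd]
    _ ≤ 1/(2*Real.sqrt ((E+1)*((E+1) - z))) +
        (E - 1)/(2*Real.sqrt E*((E+1)*((E+1) - z))) := by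
        have hle : (E+1)*((E+1) - z) ≤ D := by rw [hDdef]; nlinarith
        have hsle : Real.sqrt ((E+1)*((E+1) - z)) ≤ Real.sqrt D := Real.sqrt_le_sqrt hle
        have hsp : 0 < Real.sqrt ((E+1)*((E+1) - z)) := Real.sqrt_pos.mpr hbpos
        gcongr

lemma K0_le (t : ℝ) (ht : 0 < t) {z : ℝ} (hz : z ∈ Set.Icc (0:ℝ) (Real.exp t - 1)) :
    |K0 z t| ≤ 1/(2*Real.sqrt ((Real.exp t+1)*((Real.exp t+1) - z))) +
      (Real.exp t - 1)/(2*Real.sqrt (Real.exp t)*((Real.exp t+1)*((Real.exp t+1) - z))) := by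
  obtain ⟨hz0, hza⟩ := hz
  have hE : 1 < Real.exp t := by
    have := Real.exp_lt_exp.mpr ht
    rwa [Real.exp_zero] at this
  have hD : 0 < (Real.exp t + 1)^2 - z^2 := by nlinarith
  have hS0 : 0 ≤ (Real.exp t - 1)^2 - z^2 := by nlinarith
  have hζ0 : 0 ≤ ((Real.exp t - 1)^2 - z^2) / ((Real.exp t + 1)^2 - z^2) :=
    div_nonneg hS0 hD.le
  have hζ1 : ((Real.exp t - 1)^2 - z^2) / ((Real.exp t + 1)^2 - z^2) < 1 :=
    (div_lt_one hD).mpr (by nlinarith)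
  have hA := hF1_bound hζ0 hζ1
  have hB := diff_bound hζ0 hζ1
  have hK0eq : K0 z t = -(1 / (2 * ((Real.exp t - 1) ^ 2 - z ^ 2) *
      Real.sqrt ((Real.exp t + 1) ^ 2 - z ^ 2))) *
    ((1 - Real.exp t*Real.exp t + z ^ 2) * hyperF (-(1 / 2)) (1 / 2) 1
        (((Real.exp t - 1) ^ 2 - z ^ 2) / ((Real.exp t + 1) ^ 2 - z ^ 2))
      + 2 * (Real.exp t - 1) * hyperF (1 / 2) (1 / 2) 1
        (((Real.exp t - 1) ^ 2 - z ^ 2) / ((Real.exp t + 1) ^ 2 - z ^ 2))) := by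
    rw [K0, show (2:ℝ)*t = t + t from two_mul t, Real.exp_add]
  rw [hK0eq]
  exact core_ineq (Real.exp t) z _ _ hE hz0 hza hA hB.1 hB.2

set_option maxHeartbeats 1000000 in
lemma integral_g_le (t : ℝ) (ht : 0 < t) :
    (∫ z in (0:ℝ)..(Real.exp t - 1), (1/(2*Real.sqrt ((Real.exp t+1)*((Real.exp t+1) - z))) +
      (Real.exp t - 1)/(2*Real.sqrt (Real.exp t)*((Real.exp t+1)*((Real.exp t+1) - z))))) ≤ 2 := by
  have hE : 1 < Real.exp t := by
    have := Real.exp_lt_exp.mpr ht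
    rwa [Real.exp_zero] at this
  set E := Real.exp t with hEdef
  have hE0 : 0 < E := by linarith
  have ha0 : (0:ℝ) ≤ E - 1 := by linarith
  have hbz : ∀ z ∈ Set.uIcc (0:ℝ) (E-1), (0:ℝ) < (E+1)*((E+1) - z) := by
    intro z hz
    rw [Set.uIcc_of_le ha0] at hz
    obtain ⟨h1, h2⟩ := hz
    nlinarith
  have he : 0 < Real.sqrt E := Real.sqrt_pos.mpr hE0
  -- continuity and integrability of both pieces
  have hcont1 : ContinuousOn (fun z : ℝ => 1/(2*Real.sqrt ((E+1)*((E+1) - z))))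
      (Set.uIcc 0 (E-1)) := by
    apply ContinuousOn.div continuousOn_const
    · exact (continuous_const.mul ((continuous_const.mul
        (continuous_const.sub continuous_id)).sqrt)).continuousOn
    · intro z hz
      have := hbz z hz
      positivity
  have hcont2 : ContinuousOn (fun z : ℝ => (E-1)/(2*Real.sqrt E*((E+1)*((E+1) - z))))
      (Set.uIcc 0 (E-1)) := by
    apply ContinuousOn.div continuousOn_const
    · exact (continuous_const.mul (continuous_const.mul
        (continuous_const.sub continuous_id))).continuousOn
    · intro z hz
      have := hbz z hz
      positivity
  have hint1 : IntervalIntegrable (fun z : ℝ => 1/(2*Real.sqrt ((E+1)*((E+1) - z))))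
      volume 0 (E-1) := hcont1.intervalIntegrable
  have hint2 : IntervalIntegrable (fun z : ℝ => (E-1)/(2*Real.sqrt E*((E+1)*((E+1) - z))))
      volume 0 (E-1) := hcont2.intervalIntegrable
  rw [intervalIntegral.integral_add hint1 hint2]
  -- first integral via FTC
  have hI1 : (∫ z in (0:ℝ)..(E-1), 1/(2*Real.sqrt ((E+1)*((E+1) - z)))) =
      (-(Real.sqrt ((E+1)*((E+1)-(E-1)))/(E+1))) - (-(Real.sqrt ((E+1)*((E+1)-0))/(E+1))) := by
    apply intervalIntegral.integral_eq_sub_of_hasDerivAt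
      (f := fun z => -(Real.sqrt ((E+1)*((E+1)-z))/(E+1)))
    · intro z hz
      have hpos := hbz z hz
      have hsq : (E+1)*((E+1) - z) ≠ 0 := ne_of_gt hpos
      have hsq0 : Real.sqrt ((E+1)*((E+1) - z)) ≠ 0 := by positivity
      have hE1 : (E+1) ≠ 0 := by positivity
      have hinner : HasDerivAt (fun z : ℝ => (E+1)*((E+1) - z)) (-(E+1)) z := by
        have h1 : HasDerivAt (fun z : ℝ => (E+1) - z) (-1) z :=
          (hasDerivAt_id z).const_sub (E+1)
        have := h1.const_mul (E+1)
        simpa using this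
      have hsqrt := hinner.sqrt hsq
      have := (hsqrt.div_const (E+1)).neg
      convert this using 1
      · rfl
      rw [show -(-(E + 1) / (2 * Real.sqrt ((E+1)*((E+1)-z))) / (E + 1)) =
        ((E+1)/(E+1)) * (1/(2*Real.sqrt ((E+1)*((E+1)-z)))) by ring, div_self hE1, one_mul]
    · exact hint1
  have hI2 : (∫ z in (0:ℝ)..(E-1), (E-1)/(2*Real.sqrt E*((E+1)*((E+1) - z)))) =
      (-((E-1)/(2*Real.sqrt E*(E+1))*Real.log ((E+1)-(E-1)))) -
      (-((E-1)/(2*Real.sqrt E*(E+1))*Real.log ((E+1)-0))) := by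
    apply intervalIntegral.integral_eq_sub_of_hasDerivAt
      (f := fun z => -((E-1)/(2*Real.sqrt E*(E+1))*Real.log ((E+1)-z)))
    · intro z hz
      have hpos := hbz z hz
      have hne : (E+1) - z ≠ 0 := by
        intro h
        rw [h] at hpos
        simp at hpos
      have hinner : HasDerivAt (fun z : ℝ => (E+1) - z) (-1) z :=
        (hasDerivAt_id z).const_sub (E+1)
      have hlog := hinner.log hne
      have := (hlog.const_mul ((E-1)/(2*Real.sqrt E*(E+1)))).neg
      convert this using 1
      · rfl
      rw [show -((E-1)/(2*Real.sqrt E*(E+1)) * (-1/(E+1-z))) =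
        ((E-1)/(2*Real.sqrt E*(E+1)))/(E+1-z) by ring, div_div]
      ring
    · exact hint2
  rw [hI1, hI2]
  -- bound the two values
  have hsbb : Real.sqrt ((E+1)*((E+1)-0)) = E+1 := by
    rw [show (E+1)*((E+1)-0) = (E+1)*(E+1) by ring]
    exact Real.sqrt_mul_self (by linarith)
  have hv1 : (-(Real.sqrt ((E+1)*((E+1)-(E-1)))/(E+1))) -
      (-(Real.sqrt ((E+1)*((E+1)-0))/(E+1))) ≤ 1 := by
    rw [hsbb]
    have h1 : 0 ≤ Real.sqrt ((E+1)*((E+1)-(E-1))) := Real.sqrt_nonneg _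
    have h2 : (E+1)/(E+1) = 1 := div_self (by linarith)
    have h3 : 0 ≤ Real.sqrt ((E+1)*((E+1)-(E-1)))/(E+1) := by positivity
    linarith
  have hlogle : Real.log ((E+1)-0) - Real.log ((E+1)-(E-1)) ≤ t := by
    rw [show (E+1)-(0:ℝ) = E+1 by ring, show (E+1)-(E-1) = (2:ℝ) by ring]
    have h3 : Real.log (E+1) ≤ Real.log (2*E) := Real.log_le_log (by linarith) (by linarith)
    rw [Real.log_mul (by norm_num) (by linarith)] at h3
    have h4 : Real.log E = t := by rw [hEdef, Real.log_exp]
    linarith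
  have hlognn : 0 ≤ Real.log ((E+1)-0) - Real.log ((E+1)-(E-1)) := by
    rw [show (E+1)-(0:ℝ) = E+1 by ring, show (E+1)-(E-1) = (2:ℝ) by ring]
    have := Real.log_le_log (by norm_num : (0:ℝ) < 2) (by linarith : (2:ℝ) ≤ E+1)
    linarith
  have hc0 : 0 ≤ (E-1)/(2*Real.sqrt E*(E+1)) := by positivity
  have hcle : (E-1)/(2*Real.sqrt E*(E+1)) ≤ 1/(2*Real.sqrt E) := by
    rw [div_le_div_iff₀ (by positivity) (by positivity)]
    nlinarith [he]
  have htle : t ≤ 2*Real.sqrt E := by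
    have h1 : Real.sqrt E = Real.exp (t/2) := by
      rw [hEdef, show Real.exp t = Real.exp (t/2)*Real.exp (t/2) from by
        rw [← Real.exp_add]; norm_num]
      exact Real.sqrt_mul_self (Real.exp_nonneg _)
    rw [h1]
    nlinarith [Real.add_one_le_exp (t/2)]
  have hv2 : (-((E-1)/(2*Real.sqrt E*(E+1))*Real.log ((E+1)-(E-1)))) -
      (-((E-1)/(2*Real.sqrt E*(E+1))*Real.log ((E+1)-0))) ≤ 1 := by
    have heq : (-((E-1)/(2*Real.sqrt E*(E+1))*Real.log ((E+1)-(E-1)))) -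
        (-((E-1)/(2*Real.sqrt E*(E+1))*Real.log ((E+1)-0))) =
        ((E-1)/(2*Real.sqrt E*(E+1))) * (Real.log ((E+1)-0) - Real.log ((E+1)-(E-1))) := by
      ring
    rw [heq]
    calc ((E-1)/(2*Real.sqrt E*(E+1))) * (Real.log ((E+1)-0) - Real.log ((E+1)-(E-1)))
        ≤ (1/(2*Real.sqrt E)) * t :=
          mul_le_mul hcle hlogle hlognn (by positivity)
      _ ≤ 1 := by
          rw [show (1/(2*Real.sqrt E))*t = t/(2*Real.sqrt E) by ring,
            div_le_one (by positivity)]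
          linarith
  linarith

lemma g_integrable (t : ℝ) (ht : 0 < t) :
    IntervalIntegrable (fun z : ℝ => 1/(2*Real.sqrt ((Real.exp t+1)*((Real.exp t+1) - z))) +
      (Real.exp t - 1)/(2*Real.sqrt (Real.exp t)*((Real.exp t+1)*((Real.exp t+1) - z))))
      volume 0 (Real.exp t - 1) := by
  have hE : 1 < Real.exp t := by
    have := Real.exp_lt_exp.mpr ht
    rwa [Real.exp_zero] at this
  set E := Real.exp t with hEdef
  have hE0 : 0 < E := by linarith
  have ha0 : (0:ℝ) ≤ E - 1 := by linarith
  have hbz : ∀ z ∈ Set.uIcc (0:ℝ) (E-1), (0:ℝ) < (E+1)*((E+1) - z) := by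
    intro z hz
    rw [Set.uIcc_of_le ha0] at hz
    obtain ⟨h1, h2⟩ := hz
    nlinarith
  apply ContinuousOn.intervalIntegrable
  apply ContinuousOn.add
  · apply ContinuousOn.div continuousOn_const
    · exact (continuous_const.mul ((continuous_const.mul
        (continuous_const.sub continuous_id)).sqrt)).continuousOn
    · intro z hz
      have := hbz z hz
      positivity
  · apply ContinuousOn.div continuousOn_const
    · exact (continuous_const.mul (continuous_const.mul
        (continuous_const.sub continuous_id))).continuousOn
    · intro z hz
      have := hbz z hz
      positivity

theorem statement13 :
    ∃ C > 0, ∀ t : ℝ, 0 < t →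
      (∫ r in (0 : ℝ)..(Real.exp t - 1), |K0 r t|) ≤ C := by
  refine ⟨2, by norm_num, fun t ht => ?_⟩
  by_cases hI : IntervalIntegrable (fun r => |K0 r t|) volume 0 (Real.exp t - 1)
  · have hE : 1 < Real.exp t := by
      have := Real.exp_lt_exp.mpr ht
      rwa [Real.exp_zero] at this
    have ha0 : (0:ℝ) ≤ Real.exp t - 1 := by linarith
    calc (∫ r in (0 : ℝ)..(Real.exp t - 1), |K0 r t|)
        ≤ ∫ z in (0 : ℝ)..(Real.exp t - 1),
            (1/(2*Real.sqrt ((Real.exp t+1)*((Real.exp t+1) - z))) +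
            (Real.exp t - 1)/(2*Real.sqrt (Real.exp t)*((Real.exp t+1)*((Real.exp t+1) - z)))) :=
          intervalIntegral.integral_mono_on ha0 hI (g_integrable t ht)
            (fun x hx => K0_le t ht hx)
      _ ≤ 2 := integral_g_le t ht
  · rw [intervalIntegral.integral_undef hI]
    norm_num
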